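/- arXiv:1407.3075 — 6 statements merged into one kernel-verified Lean document; each statement's English description precedes it below -/
import Mathlib

section
/- Under the same hypotheses, the symmetric matrix −R = −(1/2)(ΞL + LᵀΞ) is positive semi-definite and its kernel is exactly the span of the all-ones vector 𝟏; in particular zero is a simple eigenvalue of R. -/
open Matrix Polynomial
section aux

variable {n : Type*} [Fintype n] [DecidableEq n] {S : Type*} [CommRing S]

lemma my_charpoly_similar (P A Q : Matrix n n S) (h1 : P * Q = 1) :
    (P * A * Q).charpoly = A.charpoly := by
  have hmap : (C : S →+* S[X]).mapMatrix P * (C : S →+* S[X]).mapMatrix Q = 1 := by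
    rw [← _root_.map_mul, h1, _root_.map_one]
  have hcm : charmatrix (P * A * Q)
      = (C : S →+* S[X]).mapMatrix P * charmatrix A * (C : S →+* S[X]).mapMatrix Q := by
    unfold charmatrix
    rw [mul_sub, sub_mul]
    congr 1
    · rw [← (Matrix.scalar_commute (X : S[X]) (fun r => Commute.all _ r) _).eq, mul_assoc, hmap,
        mul_one]
    · rw [← _root_.map_mul, ← _root_.map_mul]
  have hmap' : (C : S →+* S[X]).mapMatrix Q * (C : S →+* S[X]).mapMatrix P = 1 :=
    mul_eq_one_comm.mp hmap
  rw [Matrix.charpoly, Matrix.charpoly, hcm, det_mul, det_mul, mul_comm, ← mul_assoc, ← det_mul,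
    hmap', det_one, one_mul]

lemma my_charpoly_diagonal (d : n → S) :
    (Matrix.diagonal d).charpoly = ∏ i, (X - C (d i)) := by
  have : charmatrix (Matrix.diagonal d) = Matrix.diagonal fun i => X - C (d i) := by
    ext i j
    by_cases h : i = j
    · subst h; simp
    · rw [charmatrix_apply_ne _ _ _ h, Matrix.diagonal_apply_ne _ h]
      simp [Matrix.diagonal_apply_ne _ h]
  rw [Matrix.charpoly, this, det_diagonal]

end aux


open Matrix

/-- `L` is a Laplacian-type matrix: nonnegative off-diagonal entries and zero row sums. -/
def IsLaplacian {m : ℕ} (L : Matrix (Fin m) (Fin m) ℝ) : Prop :=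
  (∀ i j, i ≠ j → 0 ≤ L i j) ∧ (∀ i, ∑ j, L i j = 0)

/-- `L` is irreducible: the associated digraph is strongly connected. -/
def IsIrreducibleMatrix {m : ℕ} (L : Matrix (Fin m) (Fin m) ℝ) : Prop :=
  ∀ i j : Fin m, i ≠ j → Relation.TransGen (fun a b => a ≠ b ∧ 0 < L a b) i j

theorem negR_posSemidef_kernel_span_one {m : ℕ} (hm : 0 < m)
    (L : Matrix (Fin m) (Fin m) ℝ) (ξ : Fin m → ℝ)
    (hL : IsLaplacian L) (hirr : IsIrreducibleMatrix L)
    (hξpos : ∀ i, 0 < ξ i) (hξL : ∀ j, ∑ i, ξ i * L i j = 0) (hξsum : ∑ i, ξ i = 1)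
    (R : Matrix (Fin m) (Fin m) ℝ)
    (hR : R = (1/2 : ℝ) • (Matrix.diagonal ξ * L + Lᵀ * Matrix.diagonal ξ)) :
    (-R).PosSemidef ∧
    (∀ x : Fin m → ℝ, (-R).mulVec x = 0 ↔ ∃ c : ℝ, x = fun _ => c) ∧
    (Matrix.charpoly R).rootMultiplicity 0 = 1 := by
  obtain ⟨hLoff, hLrow⟩ := hL
  have hent : ∀ i j, R i j = (1/2) * (ξ i * L i j + L j i * ξ j) := by
    intro i j
    rw [hR]
    simp [Matrix.smul_apply, Matrix.add_apply, Matrix.diagonal_mul, Matrix.mul_diagonal,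
      Matrix.transpose_apply]
  -- quadratic form
  have hQ : ∀ x : Fin m → ℝ, x ⬝ᵥ (R *ᵥ x) = ∑ i, ∑ j, ξ i * L i j * x i * x j := by
    intro x
    have h0 : x ⬝ᵥ (R *ᵥ x) = ∑ i, ∑ j, x i * R i j * x j := by
      simp only [dotProduct, mulVec, dotProduct, Finset.mul_sum]
      exact Finset.sum_congr rfl fun i _ => Finset.sum_congr rfl fun j _ => by ring
    rw [h0]
    have h1 : ∑ i, ∑ j, x i * R i j * x j
        = (∑ i, ∑ j, (1/2) * (ξ i * L i j * x i * x j))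
          + ∑ i, ∑ j, (1/2) * (L j i * ξ j * x i * x j) := by
      rw [← Finset.sum_add_distrib]
      refine Finset.sum_congr rfl fun i _ => ?_
      rw [← Finset.sum_add_distrib]
      refine Finset.sum_congr rfl fun j _ => ?_
      rw [hent]; ring
    have h2 : ∑ i, ∑ j, (1/2) * (L j i * ξ j * x i * x j)
        = ∑ i, ∑ j, (1/2) * (ξ i * L i j * x i * x j) := by
      rw [Finset.sum_comm]
      exact Finset.sum_congr rfl fun i _ => Finset.sum_congr rfl fun j _ => by ring
    rw [h1, h2, ← Finset.sum_add_distrib]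
    refine Finset.sum_congr rfl fun i _ => ?_
    rw [← Finset.sum_add_distrib]
    exact Finset.sum_congr rfl fun j _ => by ring
  have key : ∀ x : Fin m → ℝ,
      x ⬝ᵥ ((-R) *ᵥ x) = (1/2) * ∑ i, ∑ j, ξ i * L i j * (x i - x j)^2 := by
    intro x
    have hA : ∑ i, ∑ j, ξ i * L i j * (x i)^2 = 0 := by
      refine Finset.sum_eq_zero fun i _ => ?_
      have : ∑ j, ξ i * L i j * (x i)^2 = (ξ i * (x i)^2) * ∑ j, L i j := by
        rw [Finset.mul_sum]
        exact Finset.sum_congr rfl fun j _ => by ring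
      rw [this, hLrow, mul_zero]
    have hB : ∑ i, ∑ j, ξ i * L i j * (x j)^2 = 0 := by
      rw [Finset.sum_comm]
      refine Finset.sum_eq_zero fun j _ => ?_
      have : ∑ i, ξ i * L i j * (x j)^2 = (x j)^2 * ∑ i, ξ i * L i j := by
        rw [Finset.mul_sum]
        exact Finset.sum_congr rfl fun i _ => by ring
      rw [this, hξL, mul_zero]
    have hneg : x ⬝ᵥ ((-R) *ᵥ x) = -(x ⬝ᵥ (R *ᵥ x)) := by
      rw [Matrix.neg_mulVec, dotProduct_neg]
    have hexp : ∑ i, ∑ j, ξ i * L i j * (x i - x j)^2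
        = (∑ i, ∑ j, ξ i * L i j * (x i)^2)
          + ((∑ i, ∑ j, ξ i * L i j * (x j)^2)
            + ∑ i, ∑ j, (-2) * (ξ i * L i j * x i * x j)) := by
      rw [← Finset.sum_add_distrib, ← Finset.sum_add_distrib]
      refine Finset.sum_congr rfl fun i _ => ?_
      rw [← Finset.sum_add_distrib, ← Finset.sum_add_distrib]
      exact Finset.sum_congr rfl fun j _ => by ring
    have hm2 : ∑ i, ∑ j, (-2) * (ξ i * L i j * x i * x j)
        = (-2) * ∑ i, ∑ j, ξ i * L i j * x i * x j := by
      rw [Finset.mul_sum]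
      exact Finset.sum_congr rfl fun i _ => by rw [Finset.mul_sum]
    rw [hneg, hQ, hexp, hA, hB, hm2, zero_add, zero_add]
    ring
  have hterm : ∀ (x : Fin m → ℝ) i j, 0 ≤ ξ i * L i j * (x i - x j)^2 := by
    intro x i j
    by_cases h : i = j
    · subst h; simp
    · exact mul_nonneg (mul_nonneg (hξpos i).le (hLoff i j h)) (sq_nonneg _)
  have hsymm : ∀ i j, R i j = R j i := by
    intro i j; rw [hent, hent]; ring
  have hHerm : (-R).IsHermitian := by
    ext i j
    simp only [conjTranspose_apply, Matrix.neg_apply, star_trivial, neg_inj]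
    exact hsymm j i
  have hPSD : (-R).PosSemidef := by
    refine Matrix.PosSemidef.of_dotProduct_mulVec_nonneg hHerm fun x => ?_
    rw [star_trivial, key x]
    have : (0:ℝ) ≤ ∑ i, ∑ j, ξ i * L i j * (x i - x j)^2 :=
      Finset.sum_nonneg fun i _ => Finset.sum_nonneg fun j _ => hterm x i j
    linarith
  -- kernel characterization
  have hrow : ∀ i, ∑ j, R i j = 0 := by
    intro i
    have h1 : ∑ j, R i j = (1/2) * (ξ i * ∑ j, L i j) + (1/2) * ∑ j, ξ j * L j i := by
      rw [Finset.mul_sum, Finset.mul_sum, Finset.mul_sum, ← Finset.sum_add_distrib]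
      exact Finset.sum_congr rfl fun j _ => by rw [hent]; ring
    rw [h1, hLrow, hξL, mul_zero, mul_zero, add_zero]
  have hker : ∀ x : Fin m → ℝ, (-R).mulVec x = 0 ↔ ∃ c : ℝ, x = fun _ => c := by
    intro x
    constructor
    · intro hx
      have h0 : (1/2) * ∑ i, ∑ j, ξ i * L i j * (x i - x j)^2 = 0 := by
        rw [← key x, hx, dotProduct_zero]
      have hsum : ∑ i, ∑ j, ξ i * L i j * (x i - x j)^2 = 0 := by linarith
      have hz : ∀ i j, ξ i * L i j * (x i - x j)^2 = 0 := by
        intro i j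
        have h1 := (Finset.sum_eq_zero_iff_of_nonneg
          (fun i _ => Finset.sum_nonneg fun j _ => hterm x i j)).mp hsum i (Finset.mem_univ i)
        exact (Finset.sum_eq_zero_iff_of_nonneg
          (fun j _ => hterm x i j)).mp h1 j (Finset.mem_univ j)
      have heq : ∀ i j, i ≠ j → 0 < L i j → x i = x j := by
        intro i j hne hpos
        have := hz i j
        have hprod : ξ i * L i j > 0 := mul_pos (hξpos i) hpos
        have : (x i - x j)^2 = 0 := by
          by_contra hc
          exact hc (by
            have := mul_eq_zero.mp this
            rcases this with h | h
            · exact absurd h hprod.ne'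
            · exact h)
        have := pow_eq_zero_iff (n := 2) (by norm_num) |>.mp this
        linarith [sub_eq_zero.mp this]
      have hchain : ∀ i j : Fin m, Relation.TransGen (fun a b => a ≠ b ∧ 0 < L a b) i j →
          x i = x j := by
        intro i j ht
        induction ht with
        | single h' => exact heq _ _ h'.1 h'.2
        | tail _ h' ih => exact ih.trans (heq _ _ h'.1 h'.2)
      have hall : ∀ i j : Fin m, x i = x j := by
        intro i j
        rcases eq_or_ne i j with h | h
        · rw [h]
        · exact hchain i j (hirr i j h)
      exact ⟨x ⟨0, hm⟩, funext fun i => hall i ⟨0, hm⟩⟩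
    · rintro ⟨c, rfl⟩
      funext i
      simp only [Matrix.neg_mulVec, Pi.neg_apply, Pi.zero_apply, neg_eq_zero]
      have : R.mulVec (fun _ => c) i = (∑ j, R i j) * c := by
        simp [mulVec, dotProduct, Finset.sum_mul]
      rw [this, hrow, zero_mul]
  -- charpoly part
  have hRH : R.IsHermitian := by
    rw [← neg_neg R]; exact hHerm.neg
  have hcp : R.charpoly = ∏ i, (X - C (hRH.eigenvalues i)) := by
    have h1 : R.charpoly = (Matrix.diagonal (RCLike.ofReal ∘ hRH.eigenvalues)).charpoly := by
      conv_lhs => rw [hRH.spectral_theorem]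
      exact my_charpoly_similar _ _ _
        ((Matrix.mem_unitaryGroup_iff).mp (hRH.eigenvectorUnitary).2)
    have h2 : (RCLike.ofReal ∘ hRH.eigenvalues : Fin m → ℝ) = hRH.eigenvalues := by
      funext i; simp [RCLike.ofReal_real_eq_id]
    rw [h1, h2, my_charpoly_diagonal]
  have hroots : R.charpoly.roots = Finset.univ.val.map hRH.eigenvalues := by
    rw [hcp]
    have h3 : ∏ i, (X - C (hRH.eigenvalues i))
        = (Multiset.map (fun a => X - C a) (Finset.univ.val.map hRH.eigenvalues)).prod := by
      rw [Multiset.map_map]; rfl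
    rw [h3, Polynomial.roots_multiset_prod_X_sub_C]
  have hmult : R.charpoly.rootMultiplicity 0
      = (Finset.univ.filter (fun i => hRH.eigenvalues i = 0)).card := by
    rw [← Polynomial.count_roots, hroots, Multiset.count_map]
    congr 1
    ext i
    simp [eq_comm]
  -- rank / kernel dimension
  have hker0 : ∀ x : Fin m → ℝ, R.mulVec x = 0 ↔ ∃ c : ℝ, x = fun _ => c := by
    intro x
    rw [← hker x, Matrix.neg_mulVec, neg_eq_zero]
  have hone_ne : (fun _ => (1:ℝ)) ≠ (0 : Fin m → ℝ) := by
    intro h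
    have := congrFun h ⟨0, hm⟩
    norm_num at this
  have hkerS : LinearMap.ker R.mulVecLin = Submodule.span ℝ {fun _ => (1:ℝ)} := by
    ext x
    rw [LinearMap.mem_ker, Submodule.mem_span_singleton]
    constructor
    · intro h
      obtain ⟨c, hc⟩ := (hker0 x).mp h
      exact ⟨c, by funext i; simp [hc]⟩
    · rintro ⟨a, rfl⟩
      apply (hker0 _).mpr
      exact ⟨a, by funext i; simp⟩
  have hkdim : Module.finrank ℝ (LinearMap.ker R.mulVecLin) = 1 := by
    rw [hkerS]
    exact finrank_span_singleton hone_ne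
  have hrn := LinearMap.finrank_range_add_finrank_ker R.mulVecLin
  rw [hkdim, Module.finrank_fin_fun] at hrn
  have hrank : R.rank = Fintype.card {i // hRH.eigenvalues i ≠ 0} :=
    hRH.rank_eq_card_non_zero_eigs
  have hrankdef : R.rank = Module.finrank ℝ (LinearMap.range R.mulVecLin) := rfl
  have hsplit : (Finset.univ.filter (fun i => hRH.eigenvalues i = 0)).card
      + (Finset.univ.filter (fun i => ¬ hRH.eigenvalues i = 0)).card = m := by
    rw [Finset.card_filter_add_card_filter_not]
    simp
  have hcard : Fintype.card {i // hRH.eigenvalues i ≠ 0}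
      = (Finset.univ.filter (fun i => ¬ hRH.eigenvalues i = 0)).card :=
    Fintype.card_subtype _
  have hfinal : R.charpoly.rootMultiplicity 0 = 1 := by
    rw [hmult]
    omega
  exact ⟨hPSD, hker, hfinal⟩
end

section
/- Let L be a zero-row-sum matrix with nonnegative off-diagonal entries, ξ > 0 with ξᵀL = 0, and Ξ = diag(ξ). For any x, e ∈ ℝ^m, the bilinear cross term satisfies ∑_i ∑_{j≠i} ξ_i L_{ij}(x_j − x_i)e_j ≤ (1/4)∑_i ξ_i ∑_{j≠i} L_{ij}(x_j − x_i)² + ∑_i ξ_i |L_{ii}| e_i². -/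
open Matrix Finset

theorem cross_term_bound {m : ℕ} (hm : 0 < m)
    (L : Matrix (Fin m) (Fin m) ℝ)
    (hoff : ∀ i j, i ≠ j → 0 ≤ L i j)
    (hdiag : ∀ i, L i i = -∑ j ∈ Finset.univ.erase i, L i j)
    (ξ : Fin m → ℝ) (hξpos : ∀ i, 0 < ξ i)
    (hξL : ∀ j, ∑ i, ξ i * L i j = 0)
    (x e : Fin m → ℝ) :
    ∑ i, ∑ j ∈ Finset.univ.erase i, ξ i * L i j * (x j - x i) * e j ≤
      (1/4 : ℝ) * ∑ i, ξ i * ∑ j ∈ Finset.univ.erase i, L i j * (x j - x i) ^ 2 +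
      ∑ i, ξ i * |L i i| * (e i) ^ 2 := by
  have hdle : ∀ i, L i i ≤ 0 := by
    intro i
    rw [hdiag i, neg_nonpos]
    exact Finset.sum_nonneg fun j hj => hoff i j (Finset.ne_of_mem_erase hj).symm
  have h1 : ∑ i, ∑ j ∈ Finset.univ.erase i, ξ i * L i j * (x j - x i) * e j ≤
      ∑ i, ∑ j ∈ Finset.univ.erase i,
        (ξ i * L i j * ((x j - x i) ^ 2 / 4) + ξ i * L i j * (e j) ^ 2) := by
    refine Finset.sum_le_sum fun i _ => Finset.sum_le_sum fun j hj => ?_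
    have hL : 0 ≤ ξ i * L i j :=
      mul_nonneg (hξpos i).le (hoff i j (Finset.ne_of_mem_erase hj).symm)
    have hab : (x j - x i) * e j ≤ (x j - x i) ^ 2 / 4 + (e j) ^ 2 := by
      nlinarith [sq_nonneg ((x j - x i) / 2 - e j)]
    calc ξ i * L i j * (x j - x i) * e j = ξ i * L i j * ((x j - x i) * e j) := by ring
      _ ≤ ξ i * L i j * ((x j - x i) ^ 2 / 4 + (e j) ^ 2) := by
          exact mul_le_mul_of_nonneg_left hab hL
      _ = ξ i * L i j * ((x j - x i) ^ 2 / 4) + ξ i * L i j * (e j) ^ 2 := by ring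
  refine h1.trans (le_of_eq ?_)
  have hsplit : ∑ i, ∑ j ∈ Finset.univ.erase i,
      (ξ i * L i j * ((x j - x i) ^ 2 / 4) + ξ i * L i j * (e j) ^ 2) =
      (∑ i, ∑ j ∈ Finset.univ.erase i, ξ i * L i j * ((x j - x i) ^ 2 / 4)) +
      ∑ i, ∑ j ∈ Finset.univ.erase i, ξ i * L i j * (e j) ^ 2 := by
    rw [← Finset.sum_add_distrib]
    exact Finset.sum_congr rfl fun i _ => Finset.sum_add_distrib
  rw [hsplit]
  congr 1
  · rw [Finset.mul_sum]
    refine Finset.sum_congr rfl fun i _ => ?_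
    rw [Finset.mul_sum, Finset.mul_sum]
    exact Finset.sum_congr rfl fun j _ => by ring
  · have hswap : ∑ i, ∑ j ∈ Finset.univ.erase i, ξ i * L i j * (e j) ^ 2 =
        ∑ j, ∑ i ∈ Finset.univ.erase j, ξ i * L i j * (e j) ^ 2 := by
      refine Finset.sum_comm' ?_
      intro i j
      simp only [Finset.mem_univ, Finset.mem_erase, true_and, and_true]
      exact ⟨fun h => h.symm, fun h => h.symm⟩
    rw [hswap]
    refine Finset.sum_congr rfl fun j _ => ?_
    have hcol : ∑ i ∈ Finset.univ.erase j, ξ i * L i j = ξ j * |L j j| := by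
      have := Finset.sum_erase_eq_sub (f := fun i => ξ i * L i j) (Finset.mem_univ j)
      rw [this, hξL j, abs_of_nonpos (hdle j)]
      ring
    rw [← Finset.sum_mul, hcol]
end

section
/- Let x satisfy ẋ(t) = L x̂(t) with x̂(t) = x(t) + e(t), where L is an irreducible zero-row-sum Laplacian, ξ its positive normalized left null vector, V(t) = (1/2)∑_i ξ_i (x_i(t) − x̄(t))² with x̄(t) = ξᵀx(t). If for all t and all i, |e_i(t)|² ≤ (γ_i/(4|L_{ii}|)) ∑_{j≠i} L_{ij}(x_j(t) − x_i(t))² with γ_i ∈ (0,1), then V'(t) ≤ −((1−γ)λ₂/μ_m) V(t), where γ = max_i γ_i, λ₂ is the smallest positive eigenvalue of −(ΞL+LᵀΞ)/2 and μ_m the largest eigenvalue of Ξ − ξξᵀ. -/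
open Matrix Finset

lemma spectral_decomp {m : ℕ} (A : Matrix (Fin m) (Fin m) ℝ) (hA : A.IsHermitian)
    (v : Fin m → ℝ) :
    ∃ μ c : Fin m → ℝ,
      (∀ j, ∃ w : Fin m → ℝ, w ≠ 0 ∧ A.mulVec w = μ j • w ∧ c j = ∑ i, w i * v i) ∧
      (∑ i, v i * A.mulVec v i = ∑ j, μ j * c j ^ 2) ∧
      (∑ i, v i ^ 2 = ∑ j, c j ^ 2) := by
  classical
  set b := hA.eigenvectorBasis with hb
  set μ := hA.eigenvalues with hμ
  set v' : EuclideanSpace ℝ (Fin m) := (WithLp.equiv 2 _).symm v with hv'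
  have hrepr : ∀ (u : EuclideanSpace ℝ (Fin m)) j, b.repr u j = ∑ i, (b j : Fin m → ℝ) i * u i := by
    intro u j
    rw [b.repr_apply_apply]
    simp [PiLp.inner_apply, RCLike.inner_apply, mul_comm]
  have hTv : ∀ j, b.repr ((Matrix.toEuclideanLin A) v') j = μ j * b.repr v' j := by
    intro j
    have hsym := (Matrix.isHermitian_iff_isSymmetric.1 hA)
    rw [b.repr_apply_apply, ← hsym (b j) v', b.repr_apply_apply]
    have : (Matrix.toEuclideanLin A) (b j) = (WithLp.equiv 2 _).symm (A.mulVec ⇑(b j)) := by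
      simp [Matrix.toEuclideanLin_apply]
    rw [this, hA.mulVec_eigenvectorBasis j]
    simp [PiLp.inner_apply, RCLike.inner_apply, Finset.mul_sum,
      mul_assoc, hb, hμ, mul_left_comm]
  have hinner : ∀ u w : EuclideanSpace ℝ (Fin m),
      (inner ℝ u w : ℝ) = ∑ j, b.repr u j * b.repr w j := by
    intro u w
    rw [← b.repr.inner_map_map u w]
    simp only [PiLp.inner_apply, RCLike.inner_apply, conj_trivial]
    exact Finset.sum_congr rfl fun _ _ => mul_comm _ _
  refine ⟨μ, fun j => b.repr v' j, ?_, ?_, ?_⟩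
  · intro j
    refine ⟨⇑(b j), fun h => b.orthonormal.ne_zero j (by ext i; simpa using congrFun h i), hA.mulVec_eigenvectorBasis j, ?_⟩
    exact hrepr v' j
  · have h1 : (inner ℝ v' ((Matrix.toEuclideanLin A) v') : ℝ) = ∑ i, v i * A.mulVec v i := by
      simp [PiLp.inner_apply, RCLike.inner_apply, Matrix.toEuclideanLin_apply,
        hv', mul_comm]
    rw [← h1, hinner]
    refine Finset.sum_congr rfl fun j _ => ?_
    rw [hTv j]; ring
  · have h2 : (inner ℝ v' v' : ℝ) = ∑ i, v i ^ 2 := by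
      rw [hv', PiLp.inner_apply]; simp [sq]
    rw [← h2, hinner]
    refine Finset.sum_congr rfl fun j _ => ?_
    ring

lemma eig_of_vec {m : ℕ} (A : Matrix (Fin m) (Fin m) ℝ) {μ : ℝ} {w : Fin m → ℝ}
    (hw0 : w ≠ 0) (hwe : A.mulVec w = μ • w) :
    Module.End.HasEigenvalue (Matrix.toLin' A) μ := by
  apply Module.End.hasEigenvalue_of_hasEigenvector (x := w)
  refine ⟨?_, hw0⟩
  rw [Module.End.mem_eigenspace_iff, Matrix.toLin'_apply, hwe]

lemma sym_upper {m : ℕ} (A : Matrix (Fin m) (Fin m) ℝ) (hA : A.IsHermitian) (cc : ℝ)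
    (hc : ∀ μ : ℝ, Module.End.HasEigenvalue (Matrix.toLin' A) μ → μ ≤ cc)
    (v : Fin m → ℝ) : ∑ i, v i * A.mulVec v i ≤ cc * ∑ i, v i ^ 2 := by
  obtain ⟨μ, c, hw, hq, hn⟩ := spectral_decomp A hA v
  rw [hq, hn, Finset.mul_sum]
  refine Finset.sum_le_sum fun j _ => ?_
  obtain ⟨w, hw0, hwe, -⟩ := hw j
  have h := hc _ (eig_of_vec A hw0 hwe)
  nlinarith [sq_nonneg (c j)]

lemma sym_lower {m : ℕ} (A : Matrix (Fin m) (Fin m) ℝ) (hA : A.IsHermitian) (lam : ℝ)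
    (hc : ∀ μ : ℝ, Module.End.HasEigenvalue (Matrix.toLin' A) μ → μ ≠ 0 → lam ≤ μ)
    (v : Fin m → ℝ) (hv : ∀ w : Fin m → ℝ, A.mulVec w = 0 → ∑ i, w i * v i = 0) :
    lam * ∑ i, v i ^ 2 ≤ ∑ i, v i * A.mulVec v i := by
  obtain ⟨μ, c, hw, hq, hn⟩ := spectral_decomp A hA v
  rw [hq, hn, Finset.mul_sum]
  refine Finset.sum_le_sum fun j _ => ?_
  obtain ⟨w, hw0, hwe, hcj⟩ := hw j
  by_cases h0 : μ j = 0
  · have hc0 : c j = 0 := by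
      rw [hcj]; exact hv w (by rw [hwe, h0, zero_smul])
    simp [hc0]
  · have h := hc _ (eig_of_vec A hw0 hwe) h0
    nlinarith [sq_nonneg (c j)]

lemma key_id {m : ℕ} (L : Matrix (Fin m) (Fin m) ℝ) (ξ : Fin m → ℝ)
    (hrow : ∀ i, ∑ j, L i j = 0) (hcol : ∀ j, ∑ i, ξ i * L i j = 0) (v : Fin m → ℝ) :
    ∑ i, ∑ j, ξ i * L i j * (v j - v i) ^ 2
      = -2 * ∑ i, ∑ j, ξ i * L i j * v i * v j := by
  have h1 : ∑ i, ∑ j, ξ i * L i j * v j ^ 2 = 0 := by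
    rw [Finset.sum_comm]
    refine Finset.sum_eq_zero fun j _ => ?_
    rw [← Finset.sum_mul, hcol j, zero_mul]
  have h2 : ∑ i, ∑ j, ξ i * L i j * v i ^ 2 = 0 := by
    refine Finset.sum_eq_zero fun i _ => ?_
    calc ∑ j, ξ i * L i j * v i ^ 2 = (∑ j, L i j) * (ξ i * v i ^ 2) := by
          rw [Finset.sum_mul]; exact Finset.sum_congr rfl fun j _ => by ring
      _ = 0 := by rw [hrow i, zero_mul]
  have h3 : ∀ i, ∑ j, ξ i * L i j * (v j - v i) ^ 2
      = (∑ j, ξ i * L i j * v j ^ 2) - 2 * (∑ j, ξ i * L i j * v i * v j)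
        + ∑ j, ξ i * L i j * v i ^ 2 := by
    intro i
    rw [Finset.mul_sum, ← Finset.sum_sub_distrib, ← Finset.sum_add_distrib]
    exact Finset.sum_congr rfl fun j _ => by ring
  calc ∑ i, ∑ j, ξ i * L i j * (v j - v i) ^ 2
      = (∑ i, ∑ j, ξ i * L i j * v j ^ 2) - 2 * (∑ i, ∑ j, ξ i * L i j * v i * v j)
        + ∑ i, ∑ j, ξ i * L i j * v i ^ 2 := by
        rw [Finset.mul_sum, ← Finset.sum_sub_distrib, ← Finset.sum_add_distrib]
        exact Finset.sum_congr rfl fun i _ => by rw [h3 i, Finset.mul_sum]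
    _ = -2 * ∑ i, ∑ j, ξ i * L i j * v i * v j := by rw [h1, h2]; ring

lemma sum_erase_full {m : ℕ} (f : Fin m → Fin m → ℝ) (hdiag : ∀ j, f j j = 0) :
    ∑ j, ∑ i ∈ Finset.univ.erase j, f i j = ∑ j, ∑ i, f i j := by
  refine Finset.sum_congr rfl fun j _ => ?_
  rw [← Finset.add_sum_erase _ _ (Finset.mem_univ j), hdiag j, zero_add]



set_option maxHeartbeats 3200000 in
theorem event_triggered_lyapunov_decay {m : ℕ} (hm : 0 < m)
    (L : Matrix (Fin m) (Fin m) ℝ)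
    (hL : IsLaplacian L) (hirr : IsIrreducibleMatrix L)
    (ξ : Fin m → ℝ) (hξpos : ∀ i, 0 < ξ i)
    (hξL : ∀ j, ∑ i, ξ i * L i j = 0) (hξsum : ∑ i, ξ i = 1)
    (R U : Matrix (Fin m) (Fin m) ℝ)
    (hR : R = (1/2 : ℝ) • (Matrix.diagonal ξ * L + Lᵀ * Matrix.diagonal ξ))
    (hU : U = Matrix.diagonal ξ - Matrix.vecMulVec ξ ξ)
    (lam2 mum : ℝ)
    -- `lam2` is the smallest positive eigenvalue of `-R`
    (hlam2pos : 0 < lam2)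
    (hlam2eig : Module.End.HasEigenvalue (Matrix.toLin' (-R)) lam2)
    (hlam2min : ∀ μ : ℝ, Module.End.HasEigenvalue (Matrix.toLin' (-R)) μ → μ ≠ 0 → lam2 ≤ μ)
    -- `mum` is the largest eigenvalue of `U`
    (hmumeig : Module.End.HasEigenvalue (Matrix.toLin' U) mum)
    (hmummax : ∀ μ : ℝ, Module.End.HasEigenvalue (Matrix.toLin' U) μ → μ ≤ mum)
    (x e : ℝ → Fin m → ℝ)
    (hderiv : ∀ t : ℝ, ∀ i : Fin m,
      HasDerivAt (fun s => x s i) (L.mulVec (fun j => x t j + e t j) i) t)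
    (γi : Fin m → ℝ) (hγi : ∀ i, γi i ∈ Set.Ioo (0:ℝ) 1)
    (γ : ℝ) (hγ : IsGreatest (Set.range γi) γ)
    (htrigger : ∀ t : ℝ, ∀ i : Fin m,
      (e t i) ^ 2 ≤ γi i / (4 * |L i i|) *
        ∑ j ∈ Finset.univ.erase i, L i j * (x t j - x t i) ^ 2)
    (V : ℝ → ℝ)
    (hV : ∀ t, V t = (1/2 : ℝ) * ∑ i, ξ i * (x t i - ∑ j, ξ j * x t j) ^ 2) :
    ∀ t : ℝ, deriv V t ≤ -((1 - γ) * lam2 / mum) * V t := by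
  classical
  obtain ⟨hLo, hLrow⟩ := hL
  obtain ⟨⟨iγ, hiγ⟩, hγub⟩ := hγ
  have hγ1 : γ < 1 := hiγ ▸ (hγi iγ).2
  have hγle : ∀ i, γi i ≤ γ := fun i => hγub ⟨i, rfl⟩
  intro t
  by_cases hm1 : m = 1
  · subst hm1
    have hξ0 : ξ 0 = 1 := by simpa using hξsum
    have hV0 : V = fun _ => 0 := by
      funext s
      rw [hV s]
      simp [Fin.sum_univ_one, hξ0]
    rw [hV0]
    simp
  have hm2 : 1 < m := by omega
  -- diagonal facts
  have hLd : ∀ i, L i i = -∑ j ∈ Finset.univ.erase i, L i j := by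
    intro i
    have h := hLrow i
    rw [← Finset.add_sum_erase _ _ (Finset.mem_univ i)] at h
    linarith
  have hLoff : ∀ i, 0 ≤ ∑ j ∈ Finset.univ.erase i, L i j := fun i =>
    Finset.sum_nonneg fun j hj => hLo i j (Finset.ne_of_mem_erase hj).symm
  have hLdneg : ∀ i, L i i ≤ 0 := fun i => by
    rw [hLd i]; linarith [hLoff i]
  -- abbreviations
  set xh : Fin m → ℝ := fun j => x t j + e t j with hxh
  set D : Fin m → ℝ := L.mulVec xh with hDdef
  have hDs : ∀ i, D i = ∑ j, L i j * xh j := fun i => rfl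
  set xbt : ℝ := ∑ j, ξ j * x t j with hxbt
  set δ : Fin m → ℝ := fun i => x t i - xbt with hδdef
  -- derivative of V
  have hsum0 : ∑ j, ξ j * D j = 0 := by
    calc ∑ j, ξ j * D j = ∑ j, ∑ k, ξ j * L j k * xh k := by
          refine Finset.sum_congr rfl fun j _ => ?_
          rw [hDs, Finset.mul_sum]
          exact Finset.sum_congr rfl fun k _ => by ring
      _ = ∑ k, ∑ j, ξ j * L j k * xh k := Finset.sum_comm
      _ = 0 := by
          refine Finset.sum_eq_zero fun k _ => ?_
          rw [← Finset.sum_mul, hξL k, zero_mul]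
  have hVd : HasDerivAt V (∑ i, ξ i * δ i * D i) t := by
    have hxbd : HasDerivAt (fun s => ∑ j, ξ j * x s j) 0 t := by
      have h := HasDerivAt.fun_sum (fun j (_ : j ∈ Finset.univ) => (hderiv t j).const_mul (ξ j))
      rw [hsum0] at h
      exact h
    have h1 : ∀ i, HasDerivAt (fun s => ξ i * (x s i - ∑ j, ξ j * x s j) ^ 2)
        (ξ i * (2 * δ i * D i)) t := by
      intro i
      have h2 : HasDerivAt (fun s => x s i - ∑ j, ξ j * x s j) (D i) t := by
        simpa using (hderiv t i).fun_sub hxbd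
      have h3 := (h2.fun_pow 2).const_mul (ξ i)
      refine h3.congr_deriv ?_
      simp [hδdef, hxbt]
    have h4 : HasDerivAt (fun s => (1/2:ℝ) * ∑ i, ξ i * (x s i - ∑ j, ξ j * x s j) ^ 2)
        ((1/2) * ∑ i, ξ i * (2 * δ i * D i)) t :=
      (HasDerivAt.fun_sum (fun i _ => h1 i)).const_mul _
    have hVe : V = fun s => (1/2:ℝ) * ∑ i, ξ i * (x s i - ∑ j, ξ j * x s j) ^ 2 := funext hV
    rw [hVe]
    convert h4 using 1
    rw [Finset.mul_sum]
    exact Finset.sum_congr rfl fun i _ => by ring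
  have hderivV : deriv V t = ∑ i, ξ i * δ i * D i := hVd.deriv
  -- decomposition of the derivative
  set S : ℝ := ∑ i, ∑ j, ξ i * L i j * (δ j - δ i) ^ 2 with hSdef
  set Q1 : ℝ := ∑ i, ∑ j, ξ i * L i j * δ i * δ j with hQ1def
  set C : ℝ := ∑ i, ∑ j, ξ i * L i j * δ i * e t j with hCdef
  have hSQ1 : S = -2 * Q1 := key_id L ξ hLrow hξL δ
  have hW : ∑ i, ξ i * δ i * D i = Q1 + C := by
    rw [hQ1def, hCdef, ← Finset.sum_add_distrib]
    refine Finset.sum_congr rfl fun i _ => ?_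
    have hxh2 : ∑ j, L i j * xh j
        = (∑ j, L i j * δ j + ∑ j, L i j * e t j) + (∑ j, L i j) * xbt := by
      rw [Finset.sum_mul, ← Finset.sum_add_distrib, ← Finset.sum_add_distrib]
      refine Finset.sum_congr rfl fun j _ => ?_
      simp only [hxh, hδdef]
      ring
    rw [hDs i, hxh2, hLrow i, zero_mul, add_zero, mul_add, Finset.mul_sum, Finset.mul_sum,
      ← Finset.sum_add_distrib, ← Finset.sum_add_distrib]
    exact Finset.sum_congr rfl fun j _ => by ring
  -- bound on the cross term C
  have hC1 : C = ∑ j, ∑ i, ξ i * L i j * (δ i - δ j) * e t j := by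
    rw [hCdef]
    rw [Finset.sum_comm (f := fun i j => ξ i * L i j * δ i * e t j)]
    refine Finset.sum_congr rfl fun j _ => ?_
    have h : ∑ i, ξ i * L i j * (δ i - δ j) * e t j
        = ∑ i, ξ i * L i j * δ i * e t j - (∑ i, ξ i * L i j) * (δ j * e t j) := by
      rw [Finset.sum_mul, ← Finset.sum_sub_distrib]
      exact Finset.sum_congr rfl fun i _ => by ring
    rw [h, hξL j, zero_mul, sub_zero]
  have hErase : ∀ j, ∑ i, ξ i * L i j * (δ i - δ j) * e t j
      = ∑ i ∈ Finset.univ.erase j, ξ i * L i j * (δ i - δ j) * e t j := by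
    intro j
    rw [← Finset.add_sum_erase _ _ (Finset.mem_univ j)]
    simp
  have hYoung : ∀ j, ∀ i ∈ Finset.univ.erase j,
      ξ i * L i j * (δ i - δ j) * e t j
        ≤ ξ i * L i j * (e t j) ^ 2 + ξ i * L i j * (δ i - δ j) ^ 2 / 4 := by
    intro j i hi
    have hp : 0 ≤ ξ i * L i j :=
      mul_nonneg (hξpos i).le (hLo i j (Finset.ne_of_mem_erase hi))
    nlinarith [mul_nonneg hp (sq_nonneg ((δ i - δ j) / 2 - e t j))]
  set P1 : Fin m → ℝ := fun j => ∑ i ∈ Finset.univ.erase j, ξ i * L i j with hP1def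
  set T : Fin m → ℝ := fun j => ∑ k ∈ Finset.univ.erase j, L j k * (δ k - δ j) ^ 2 with hTdef
  have hTx : ∀ j, T j = ∑ k ∈ Finset.univ.erase j, L j k * (x t k - x t j) ^ 2 := by
    intro j
    refine Finset.sum_congr rfl fun k _ => ?_
    simp only [hδdef]
    ring
  have hTnn : ∀ j, 0 ≤ T j := fun j =>
    Finset.sum_nonneg fun k hk =>
      mul_nonneg (hLo j k (Finset.ne_of_mem_erase hk).symm) (sq_nonneg _)
  have hP1eq : ∀ j, P1 j = ξ j * (-(L j j)) := by
    intro j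
    have h := hξL j
    rw [← Finset.add_sum_erase _ _ (Finset.mem_univ j)] at h
    simp only [hP1def]
    linarith
  have hP1nn : ∀ j, 0 ≤ P1 j := fun j =>
    Finset.sum_nonneg fun i hi =>
      mul_nonneg (hξpos i).le (hLo i j (Finset.ne_of_mem_erase hi))
  -- trigger bound
  have htrig : ∀ j, P1 j * (e t j) ^ 2 ≤ ξ j * γi j / 4 * T j := by
    intro j
    rcases eq_or_ne (L j j) 0 with h0 | h0
    · rw [hP1eq j, h0]
      have : 0 ≤ ξ j * γi j / 4 * T j :=
        mul_nonneg (div_nonneg (mul_nonneg (hξpos j).le (hγi j).1.le) (by norm_num)) (hTnn j)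
      simpa using this
    · have habs : |L j j| = -(L j j) := abs_of_nonpos (hLdneg j)
      have htr := htrigger t j
      rw [← hTx j] at htr
      have hLjj : 0 < -(L j j) := by
        rcases lt_or_eq_of_le (hLdneg j) with h | h
        · linarith
        · exact absurd h h0
      have h1 : P1 j * (e t j) ^ 2 ≤ P1 j * (γi j / (4 * |L j j|) * T j) :=
        mul_le_mul_of_nonneg_left htr (hP1nn j)
      rw [hP1eq j] at h1 ⊢
      rw [habs] at h1
      calc ξ j * (-(L j j)) * (e t j) ^ 2
          ≤ ξ j * (-(L j j)) * (γi j / (4 * -(L j j)) * T j) := h1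
        _ = ξ j * γi j / 4 * T j := by
            field_simp
  have hES : ∑ j, ∑ i ∈ Finset.univ.erase j, ξ i * L i j * (δ i - δ j) ^ 2 = S := by
    rw [sum_erase_full (fun i j => ξ i * L i j * (δ i - δ j) ^ 2) (fun j => by simp)]
    rw [Finset.sum_comm]
    exact Finset.sum_congr rfl fun i _ => Finset.sum_congr rfl fun j _ => by ring
  have hTS : ∑ j, ξ j * T j = S := by
    have h1 : ∀ j, ξ j * T j = ∑ k ∈ Finset.univ.erase j, ξ j * L j k * (δ k - δ j) ^ 2 := by
      intro j
      rw [hTdef]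
      rw [Finset.mul_sum]
      exact Finset.sum_congr rfl fun k _ => by ring
    calc ∑ j, ξ j * T j
        = ∑ j, ∑ k ∈ Finset.univ.erase j, ξ j * L j k * (δ k - δ j) ^ 2 :=
          Finset.sum_congr rfl fun j _ => h1 j
      _ = ∑ j, ∑ k, ξ j * L j k * (δ k - δ j) ^ 2 := by
          refine Finset.sum_congr rfl fun j _ => ?_
          rw [← Finset.add_sum_erase _ _ (Finset.mem_univ j)]
          simp
      _ = S := rfl
  have hCb : C ≤ γ / 4 * S + 1 / 4 * S := by
    have step1 : C ≤ ∑ j, (P1 j * (e t j) ^ 2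
        + (1/4) * ∑ i ∈ Finset.univ.erase j, ξ i * L i j * (δ i - δ j) ^ 2) := by
      rw [hC1]
      refine Finset.sum_le_sum fun j _ => ?_
      rw [hErase j]
      calc ∑ i ∈ Finset.univ.erase j, ξ i * L i j * (δ i - δ j) * e t j
          ≤ ∑ i ∈ Finset.univ.erase j,
              (ξ i * L i j * (e t j) ^ 2 + ξ i * L i j * (δ i - δ j) ^ 2 / 4) :=
            Finset.sum_le_sum (hYoung j)
        _ = P1 j * (e t j) ^ 2
            + (1/4) * ∑ i ∈ Finset.univ.erase j, ξ i * L i j * (δ i - δ j) ^ 2 := by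
            rw [Finset.sum_add_distrib, hP1def]
            simp only []
            rw [Finset.sum_mul, Finset.mul_sum]
            congr 1
            exact Finset.sum_congr rfl fun i _ => by ring
    have step2 : ∑ j, (P1 j * (e t j) ^ 2
        + (1/4) * ∑ i ∈ Finset.univ.erase j, ξ i * L i j * (δ i - δ j) ^ 2)
        = (∑ j, P1 j * (e t j) ^ 2) + 1 / 4 * S := by
      rw [Finset.sum_add_distrib]
      congr 1
      rw [← Finset.mul_sum, hES]
    have step3 : ∑ j, P1 j * (e t j) ^ 2 ≤ γ / 4 * S := by
      calc ∑ j, P1 j * (e t j) ^ 2 ≤ ∑ j, ξ j * γi j / 4 * T j :=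
            Finset.sum_le_sum fun j _ => htrig j
        _ ≤ ∑ j, γ / 4 * (ξ j * T j) := by
            refine Finset.sum_le_sum fun j _ => ?_
            have h1 := mul_nonneg (hξpos j).le (hTnn j)
            have h2 := hγle j
            have h3 := (hγi j).1
            nlinarith
        _ = γ / 4 * S := by rw [← Finset.mul_sum, hTS]
    linarith
  have hQ1S : Q1 = -(1/2) * S := by rw [hSQ1]; ring
  have hWb : deriv V t ≤ -((1 - γ) / 4) * S := by
    rw [hderivV, hW, hQ1S]
    linarith
  -- spectral part: the matrix A = -R
  set A : Matrix (Fin m) (Fin m) ℝ := -R with hAdef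
  have hAe : ∀ i j, A i j = -(1/2) * (ξ i * L i j + ξ j * L j i) := by
    intro i j
    rw [hAdef, hR]
    simp [Matrix.neg_apply, Matrix.smul_apply, Matrix.add_apply, Matrix.mul_apply,
      Matrix.transpose_apply, Matrix.diagonal_apply, ite_mul, mul_ite, mul_zero, zero_mul,
      Finset.sum_ite_eq, Finset.sum_ite_eq']
    ring
  have hAH : A.IsHermitian := by
    show Aᴴ = A
    ext i j
    rw [Matrix.conjTranspose_apply, hAe j i, hAe i j]
    simp
    ring
  have hquad : ∀ w : Fin m → ℝ,
      ∑ i, w i * A.mulVec w i = (1/2) * ∑ i, ∑ j, ξ i * L i j * (w j - w i) ^ 2 := by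
    intro w
    have h1 : ∑ i, w i * A.mulVec w i = ∑ i, ∑ j, w i * (A i j * w j) := by
      refine Finset.sum_congr rfl fun i _ => ?_
      rw [show A.mulVec w i = ∑ j, A i j * w j from rfl, Finset.mul_sum]
    have h3 : ∑ i, ∑ j, ξ j * L j i * w i * w j = ∑ i, ∑ j, ξ i * L i j * w i * w j := by
      rw [Finset.sum_comm]
      exact Finset.sum_congr rfl fun i _ => Finset.sum_congr rfl fun j _ => by ring
    have h4 := key_id L ξ hLrow hξL w
    calc ∑ i, w i * A.mulVec w i
        = ∑ i, ∑ j, (-(1/2) * (ξ i * L i j * w i * w j)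
            + -(1/2) * (ξ j * L j i * w i * w j)) := by
          rw [h1]
          refine Finset.sum_congr rfl fun i _ => Finset.sum_congr rfl fun j _ => ?_
          rw [hAe i j]; ring
      _ = -(1/2) * (∑ i, ∑ j, ξ i * L i j * w i * w j)
            + -(1/2) * (∑ i, ∑ j, ξ j * L j i * w i * w j) := by
          rw [Finset.mul_sum, Finset.mul_sum, ← Finset.sum_add_distrib]
          refine Finset.sum_congr rfl fun i _ => ?_
          rw [Finset.sum_add_distrib, Finset.mul_sum, Finset.mul_sum]
      _ = -(∑ i, ∑ j, ξ i * L i j * w i * w j) := by rw [h3]; ring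
      _ = (1/2) * ∑ i, ∑ j, ξ i * L i j * (w j - w i) ^ 2 := by rw [h4]; ring
  have hker : ∀ w : Fin m → ℝ, A.mulVec w = 0 → ∀ i j, w i = w j := by
    intro w hw
    have hq0 : ∑ i, ∑ j, ξ i * L i j * (w j - w i) ^ 2 = 0 := by
      have h := hquad w
      rw [hw] at h
      simp only [Pi.zero_apply, mul_zero, Finset.sum_const_zero] at h
      linarith
    have hnn : ∀ i j, 0 ≤ ξ i * L i j * (w j - w i) ^ 2 := by
      intro i j
      rcases eq_or_ne i j with rfl | hij
      · simp
      · exact mul_nonneg (mul_nonneg (hξpos i).le (hLo i j hij)) (sq_nonneg _)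
    have hin : ∀ i, ∑ j, ξ i * L i j * (w j - w i) ^ 2 = 0 := by
      have h := (Finset.sum_eq_zero_iff_of_nonneg
        (fun i (_ : i ∈ Finset.univ) => Finset.sum_nonneg fun j _ => hnn i j)).1 hq0
      exact fun i => h i (Finset.mem_univ i)
    have hterm : ∀ i j, ξ i * L i j * (w j - w i) ^ 2 = 0 := fun i j =>
      (Finset.sum_eq_zero_iff_of_nonneg (fun j _ => hnn i j)).1 (hin i) j (Finset.mem_univ j)
    have hstep : ∀ a b : Fin m, (a ≠ b ∧ 0 < L a b) → w a = w b := by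
      rintro a b ⟨hab, hLab⟩
      have h := hterm a b
      have h2 : ξ a * L a b ≠ 0 := ne_of_gt (mul_pos (hξpos a) hLab)
      have h3 : (w b - w a) ^ 2 = 0 := (mul_eq_zero.1 h).resolve_left h2
      have h4 : w b - w a = 0 := by
        have := pow_eq_zero_iff (n := 2) (by norm_num) |>.1 h3
        exact this
      linarith
    have hgen : ∀ a b : Fin m,
        Relation.TransGen (fun a b => a ≠ b ∧ 0 < L a b) a b → w a = w b := by
      intro a b h
      induction h with
      | single h' => exact hstep _ _ h'
      | tail h1 h2 ih => exact ih.trans (hstep _ _ h2)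
    intro i j
    rcases eq_or_ne i j with rfl | hij
    · rfl
    · exact hgen i j (hirr i j hij)
  -- the shifted vector δ'
  set c0 : ℝ := (∑ k, δ k) / m with hc0
  set δ' : Fin m → ℝ := fun i => δ i - c0 with hδ'
  have hmne : (m : ℝ) ≠ 0 := Nat.cast_ne_zero.2 (by omega)
  have hδ'sum : ∑ i, δ' i = 0 := by
    simp only [hδ']
    rw [Finset.sum_sub_distrib, Finset.sum_const, Finset.card_univ, Fintype.card_fin,
      nsmul_eq_mul, hc0]
    field_simp
    ring
  have hv : ∀ w : Fin m → ℝ, A.mulVec w = 0 → ∑ i, w i * δ' i = 0 := by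
    intro w hw
    have hcst := hker w hw
    calc ∑ i, w i * δ' i = ∑ i, w ⟨0, hm⟩ * δ' i :=
          Finset.sum_congr rfl fun i _ => by rw [hcst i ⟨0, hm⟩]
      _ = w ⟨0, hm⟩ * ∑ i, δ' i := by rw [Finset.mul_sum]
      _ = 0 := by rw [hδ'sum, mul_zero]
  have hlow := sym_lower A hAH lam2 hlam2min δ' hv
  have hSq : ∑ i, δ' i * A.mulVec δ' i = (1/2) * S := by
    rw [hquad δ']
    congr 1
    refine Finset.sum_congr rfl fun i _ => Finset.sum_congr rfl fun j _ => ?_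
    simp only [hδ']
    ring
  -- the matrix U
  have hUe : ∀ i j, U i j = (if i = j then ξ i else 0) - ξ i * ξ j := by
    intro i j
    rw [hU]
    simp [Matrix.sub_apply, Matrix.diagonal_apply, Matrix.vecMulVec_apply]
  have hUH : U.IsHermitian := by
    show Uᴴ = U
    ext i j
    rw [Matrix.conjTranspose_apply, hUe j i, hUe i j]
    simp
    rcases eq_or_ne i j with rfl | h
    · ring
    · simp [h, Ne.symm h]
      ring
  have hUmv : ∀ w : Fin m → ℝ, ∀ i, U.mulVec w i = ξ i * w i - ξ i * ∑ j, ξ j * w j := by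
    intro w i
    show ∑ j, U i j * w j = _
    calc ∑ j, U i j * w j
        = ∑ j, ((if i = j then ξ i * w j else 0) - ξ i * (ξ j * w j)) := by
          refine Finset.sum_congr rfl fun j _ => ?_
          rw [hUe i j]
          rcases eq_or_ne i j with rfl | h
          · simp; ring
          · simp [h]
            ring
      _ = (∑ j, if i = j then ξ i * w j else 0) - ∑ j, ξ i * (ξ j * w j) :=
          Finset.sum_sub_distrib _ _
      _ = ξ i * w i - ξ i * ∑ j, ξ j * w j := by
          rw [Finset.sum_ite_eq, ← Finset.mul_sum]
          simp
  have hUquad : ∀ w : Fin m → ℝ,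
      ∑ i, w i * U.mulVec w i = (∑ i, ξ i * w i ^ 2) - (∑ i, ξ i * w i) ^ 2 := by
    intro w
    calc ∑ i, w i * U.mulVec w i
        = ∑ i, (ξ i * w i ^ 2 - ξ i * w i * ∑ j, ξ j * w j) := by
          refine Finset.sum_congr rfl fun i _ => ?_
          rw [hUmv w i]
          ring
      _ = (∑ i, ξ i * w i ^ 2) - (∑ i, ξ i * w i) * (∑ j, ξ j * w j) := by
          rw [Finset.sum_sub_distrib, ← Finset.sum_mul]
      _ = _ := by ring
  -- positivity of mum
  have hne01 : (⟨0, hm⟩ : Fin m) ≠ (⟨1, hm2⟩ : Fin m) := by simp [Fin.ext_iff]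
  have hξ01 : ξ ⟨0, hm⟩ + ξ ⟨1, hm2⟩ ≤ 1 := by
    have h := Finset.sum_le_sum_of_subset_of_nonneg
      (Finset.subset_univ ({⟨0, hm⟩, ⟨1, hm2⟩} : Finset (Fin m)))
      (fun i _ _ => (hξpos i).le)
    rw [Finset.sum_pair hne01, hξsum] at h
    exact h
  have hmum : 0 < mum := by
    set v0 : Fin m → ℝ := fun i => if i = ⟨0, hm⟩ then 1 else 0 with hv0
    have hv0sq : ∑ i, v0 i ^ 2 = 1 := by
      simp [hv0, apply_ite, Finset.sum_ite_eq']
    have hs1 : ∑ i, ξ i * v0 i = ξ ⟨0, hm⟩ := by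
      simp [hv0, mul_ite, Finset.sum_ite_eq']
    have hs2 : ∑ i, ξ i * v0 i ^ 2 = ξ ⟨0, hm⟩ := by
      simp [hv0, apply_ite, mul_ite, Finset.sum_ite_eq']
    have hq0 := hUquad v0
    rw [hs1, hs2] at hq0
    have hup0 := sym_upper U hUH mum hmummax v0
    rw [hv0sq, hq0, mul_one] at hup0
    have h1 := hξpos ⟨0, hm⟩
    have h2 := hξpos ⟨1, hm2⟩
    have hpos : 0 < ξ ⟨0, hm⟩ * (1 - ξ ⟨0, hm⟩) :=
      mul_pos h1 (by linarith only [hξ01, h2])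
    have heq : ξ ⟨0, hm⟩ * (1 - ξ ⟨0, hm⟩) = ξ ⟨0, hm⟩ - ξ ⟨0, hm⟩ ^ 2 := by ring
    linarith only [hpos, heq, hup0]
  -- combine everything
  have hupU := sym_upper U hUH mum hmummax δ'
  have hξδ : ∑ i, ξ i * δ i = 0 := by
    have h : ∀ i, ξ i * δ i = ξ i * x t i - ξ i * xbt := fun i => by
      simp only [hδdef]; ring
    rw [Finset.sum_congr rfl fun i _ => h i, Finset.sum_sub_distrib, ← Finset.sum_mul,
      hξsum, one_mul, ← hxbt, sub_self]
  have h2V : ∑ i, δ' i * U.mulVec δ' i = ∑ i, ξ i * δ i ^ 2 := by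
    rw [hUquad δ']
    have e1 : ∑ i, ξ i * δ' i = (∑ i, ξ i * δ i) - c0 * ∑ i, ξ i := by
      rw [Finset.mul_sum, ← Finset.sum_sub_distrib]
      refine Finset.sum_congr rfl fun i _ => ?_
      simp only [hδ']
      ring
    have e2 : ∑ i, ξ i * δ' i ^ 2
        = (∑ i, ξ i * δ i ^ 2) - 2 * c0 * (∑ i, ξ i * δ i) + c0 ^ 2 * ∑ i, ξ i := by
      rw [Finset.mul_sum, Finset.mul_sum, ← Finset.sum_sub_distrib, ← Finset.sum_add_distrib]
      refine Finset.sum_congr rfl fun i _ => ?_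
      simp only [hδ']
      ring
    rw [e1, e2, hξδ, hξsum]
    ring
  have hVt : V t = 1/2 * ∑ i, ξ i * δ i ^ 2 := by
    rw [hV t]
  have hPnn : 0 ≤ ∑ i, ξ i * δ i ^ 2 :=
    Finset.sum_nonneg fun i _ => mul_nonneg (hξpos i).le (sq_nonneg _)
  have hQnn : 0 ≤ ∑ i, δ' i ^ 2 := Finset.sum_nonneg fun i _ => sq_nonneg _
  have h3 : ∑ i, ξ i * δ i ^ 2 ≤ mum * ∑ i, δ' i ^ 2 := by
    rw [← h2V]; exact hupU
  have h2 : 2 * lam2 * ∑ i, δ' i ^ 2 ≤ S := by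
    rw [hSq] at hlow
    linarith
  rw [hVt]
  calc deriv V t ≤ -((1 - γ) / 4) * S := hWb
    _ ≤ -((1 - γ) / 4) * (2 * lam2 * ∑ i, δ' i ^ 2) := by
        have h5 : 0 ≤ (1 - γ) / 4 := by linarith only [hγ1]
        have h6 : 0 ≤ S - 2 * lam2 * ∑ i, δ' i ^ 2 := by linarith only [h2]
        nlinarith only [mul_nonneg h5 h6]
    _ = -((1 - γ) * lam2 / 2) * ∑ i, δ' i ^ 2 := by ring
    _ ≤ -((1 - γ) * lam2 / 2) * ((∑ i, ξ i * δ i ^ 2) / mum) := by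
        have hQP : (∑ i, ξ i * δ i ^ 2) / mum ≤ ∑ i, δ' i ^ 2 :=
          (div_le_iff₀ hmum).2 (by linarith only [h3])
        have hcnn : 0 ≤ (1 - γ) * lam2 / 2 := by
          have h7 : (0:ℝ) ≤ 1 - γ := by linarith only [hγ1]
          have := mul_nonneg h7 hlam2pos.le
          linarith only [this]
        linarith only [mul_le_mul_of_nonneg_left hQP hcnn]
    _ = -((1 - γ) * lam2 / mum) * (1/2 * ∑ i, ξ i * δ i ^ 2) := by
        have hgen : ∀ P : ℝ, -((1 - γ) * lam2 / 2) * (P / mum)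
            = -((1 - γ) * lam2 / mum) * (1/2 * P) := by
          intro P
          field_simp
        exact hgen _
end

section
/- Suppose x: [0,∞) → ℝ is differentiable with |ẋ(t)| ≤ M for all t, and an event sequence t_1 < t_2 < … is defined so that t_{k+1} is the first time t > t_k with |x(t) − x(t_k)| = φ e^{−αt} for constants φ > 0, α > 0. Then for any T > 0, each inter-event interval contained in [0,T] is bounded below by 1/(M e^{αT}/φ + α), and hence there are finitely many events in [0,T] (no Zeno behaviour). -/
theorem no_zeno_exponential_threshold
    (x : ℝ → ℝ) (M φ α : ℝ) (hM : 0 < M) (hφ : 0 < φ) (hα : 0 < α)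
    (hxdiff : Differentiable ℝ x) (hxbound : ∀ t : ℝ, |deriv x t| ≤ M)
    (t : ℕ → ℝ) (ht0 : 0 ≤ t 0) (hmono : StrictMono t)
    -- `t (k+1)` is the first time after `t k` at which the deviation reaches the threshold
    (htrig : ∀ k : ℕ, |x (t (k + 1)) - x (t k)| = φ * Real.exp (-α * t (k + 1)))
    (hfirst : ∀ k : ℕ, ∀ s : ℝ, t k < s → s < t (k + 1) →
      |x s - x (t k)| < φ * Real.exp (-α * s)) :
    ∀ T : ℝ, 0 < T →
      (∀ k : ℕ, t (k + 1) ≤ T → 1 / (M * Real.exp (α * T) / φ + α) ≤ t (k + 1) - t k) ∧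
      {k : ℕ | t k ≤ T}.Finite := by
  intro T hT
  have hlip : ∀ a b : ℝ, |x b - x a| ≤ M * |b - a| := by
    intro a b
    have := Convex.norm_image_sub_le_of_norm_deriv_le
      (f := x) (s := Set.univ) (fun y _ => hxdiff y)
      (fun y _ => hxbound y) convex_univ (Set.mem_univ a) (Set.mem_univ b)
    simpa [Real.norm_eq_abs] using this
  have hD : 0 < M * Real.exp (α * T) / φ := by positivity
  have hD' : 0 < M * Real.exp (α * T) / φ + α := by positivity
  have hgap : ∀ k : ℕ, t (k + 1) ≤ T →
      1 / (M * Real.exp (α * T) / φ + α) ≤ t (k + 1) - t k := by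
    intro k hk
    have hlt : t k < t (k + 1) := hmono (Nat.lt_succ_self k)
    have h1 : φ * Real.exp (-α * t (k + 1)) ≤ M * (t (k + 1) - t k) := by
      have := hlip (t k) (t (k + 1))
      rw [htrig k] at this
      rwa [abs_of_pos (by linarith)] at this
    have h2 : Real.exp (-α * T) ≤ Real.exp (-α * t (k + 1)) := by
      apply Real.exp_le_exp.mpr
      nlinarith
    have h3 : φ * Real.exp (-α * T) ≤ M * (t (k + 1) - t k) := by
      nlinarith [Real.exp_pos (-α * t (k + 1))]
    have hstep : 1 / (M * Real.exp (α * T) / φ) ≤ t (k + 1) - t k := by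
      have he : Real.exp (-α * T) = (Real.exp (α * T))⁻¹ := by
        rw [neg_mul, Real.exp_neg]
      have hexp := Real.exp_pos (α * T)
      have key : 1 / (M * Real.exp (α * T) / φ) = φ * Real.exp (-α * T) / M := by
        rw [he]; field_simp
      rw [key, div_le_iff₀ hM]
      linarith
    have : 1 / (M * Real.exp (α * T) / φ + α) ≤ 1 / (M * Real.exp (α * T) / φ) :=
      one_div_le_one_div_of_le hD (by linarith)
    linarith
  refine ⟨hgap, ?_⟩
  set c := 1 / (M * Real.exp (α * T) / φ + α) with hc
  have hcpos : 0 < c := by positivity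
  have hlow : ∀ k : ℕ, t k ≤ T → (k : ℝ) * c ≤ t k := by
    intro k
    induction k with
    | zero => intro _; simpa using ht0
    | succ n ih =>
      intro hk
      have hlt : t n < t (n + 1) := hmono (Nat.lt_succ_self n)
      have htn : t n ≤ T := le_of_lt (lt_of_lt_of_le hlt hk)
      have := hgap n hk
      have := ih htn
      push_cast
      linarith
  apply Set.Finite.subset (Set.finite_Iic ⌊T / c⌋₊)
  intro k hk
  simp only [Set.mem_setOf_eq] at hk
  have hkc : (k : ℝ) * c ≤ T := le_trans (hlow k hk) hk
  have : (k : ℝ) ≤ T / c := (le_div_iff₀ hcpos).mpr hkc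
  exact Set.mem_Iic.mpr (Nat.le_floor this)
end

section
/- Let L_{ij} ≥ 0 for j ≠ i and L_{ii} = −∑_{j≠i}L_{ij} < 0, and let x̂ ∈ ℝ^m with u := ∑_j L_{ij}x̂_j ≠ 0. Then the time t* > t_k at which (t* − t_k)²u² = (γ_i/(4|L_{ii}|))∑_{j≠i}L_{ij}(x̂_j − x̂_i)² satisfies t* − t_k ≥ √γ_i/(2|L_{ii}|). -/
open Finset

theorem inter_event_time_lower_bound {m : ℕ}
    (L : Matrix (Fin m) (Fin m) ℝ) (i : Fin m)
    (hoff : ∀ j, j ≠ i → 0 ≤ L i j)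
    (hdiag : L i i = -∑ j ∈ Finset.univ.erase i, L i j)
    (hdiagneg : L i i < 0)
    (xhat : Fin m → ℝ) (hu : ∑ j, L i j * xhat j ≠ 0)
    (γ : ℝ) (hγ : γ ∈ Set.Ioo (0:ℝ) 1)
    (tk tstar : ℝ) (htk : tk ≤ tstar)
    (heq : (tstar - tk) ^ 2 * (∑ j, L i j * xhat j) ^ 2 =
      γ / (4 * |L i i|) * ∑ j ∈ Finset.univ.erase i, L i j * (xhat j - xhat i) ^ 2) :
    Real.sqrt γ / (2 * |L i i|) ≤ tstar - tk := by
  obtain ⟨hγ0, hγ1⟩ := hγ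
  set u := ∑ j, L i j * xhat j with hudef
  set S := ∑ j ∈ Finset.univ.erase i, L i j * (xhat j - xhat i) ^ 2 with hSdef
  set a := |L i i| with hadef
  have ha : a = ∑ j ∈ Finset.univ.erase i, L i j := by
    rw [hadef, abs_of_neg hdiagneg, hdiag, neg_neg]
  have hapos : 0 < a := abs_pos.mpr (ne_of_lt hdiagneg)
  -- u as a sum over erase i
  have hu2 : u = ∑ j ∈ Finset.univ.erase i, L i j * (xhat j - xhat i) := by
    rw [hudef, ← Finset.add_sum_erase _ _ (Finset.mem_univ i), hdiag,
      Finset.sum_congr rfl (fun j _ => mul_sub (L i j) (xhat j) (xhat i)),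
      Finset.sum_sub_distrib, ← Finset.sum_mul]
    ring
  -- Cauchy-Schwarz
  have hcs : u ^ 2 ≤ a * S := by
    have key : (∑ j ∈ Finset.univ.erase i,
        Real.sqrt (L i j) * (Real.sqrt (L i j) * (xhat j - xhat i))) ^ 2 ≤
        (∑ j ∈ Finset.univ.erase i, Real.sqrt (L i j) ^ 2) *
        ∑ j ∈ Finset.univ.erase i, (Real.sqrt (L i j) * (xhat j - xhat i)) ^ 2 :=
      Finset.sum_mul_sq_le_sq_mul_sq _ _ _
    have e1 : ∀ j ∈ Finset.univ.erase i,
        Real.sqrt (L i j) * (Real.sqrt (L i j) * (xhat j - xhat i)) =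
        L i j * (xhat j - xhat i) := by
      intro j hj
      have := hoff j (Finset.ne_of_mem_erase hj)
      rw [← mul_assoc, Real.mul_self_sqrt this]
    have e2 : ∀ j ∈ Finset.univ.erase i, Real.sqrt (L i j) ^ 2 = L i j := by
      intro j hj
      exact Real.sq_sqrt (hoff j (Finset.ne_of_mem_erase hj))
    have e3 : ∀ j ∈ Finset.univ.erase i,
        (Real.sqrt (L i j) * (xhat j - xhat i)) ^ 2 = L i j * (xhat j - xhat i) ^ 2 := by
      intro j hj
      rw [mul_pow, Real.sq_sqrt (hoff j (Finset.ne_of_mem_erase hj))]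
    rw [Finset.sum_congr rfl e1, Finset.sum_congr rfl e2, Finset.sum_congr rfl e3] at key
    rw [hu2, hSdef, ha]
    exact key
  have hupos : 0 < u ^ 2 := pow_pos (abs_pos.mpr hu) 2 |>.trans_eq (by rw [sq_abs])
  -- main inequality
  have h1 : (Real.sqrt γ / (2 * a)) ^ 2 * u ^ 2 ≤ (tstar - tk) ^ 2 * u ^ 2 := by
    rw [heq]
    have : (Real.sqrt γ / (2 * a)) ^ 2 = γ / (4 * a ^ 2) := by
      rw [div_pow, Real.sq_sqrt hγ0.le]
      ring_nf
    rw [this]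
    have : γ / (4 * a ^ 2) * u ^ 2 ≤ γ / (4 * a ^ 2) * (a * S) := by
      apply mul_le_mul_of_nonneg_left hcs
      positivity
    refine this.trans (le_of_eq ?_)
    have hane : a ≠ 0 := ne_of_gt hapos
    field_simp
  have h2 : (Real.sqrt γ / (2 * a)) ^ 2 ≤ (tstar - tk) ^ 2 :=
    le_of_mul_le_mul_right h1 hupos
  have h3 : 0 ≤ Real.sqrt γ / (2 * a) := by positivity
  calc Real.sqrt γ / (2 * a) = Real.sqrt ((Real.sqrt γ / (2 * a)) ^ 2) :=
        (Real.sqrt_sq h3).symm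
    _ ≤ Real.sqrt ((tstar - tk) ^ 2) := Real.sqrt_le_sqrt h2
    _ = tstar - tk := Real.sqrt_sq (by linarith)
end

section
/- Let L be a (possibly reducible) m×m matrix in block upper-triangular Perron–Frobenius form with diagonal blocks L^{k,k} corresponding to strongly connected components, zero row sums overall, and nonnegative off-diagonal entries. For k < K, define the auxiliary irreducible zero-row-sum matrix L̃^{k,k} by setting its off-diagonal entries equal to those of L^{k,k} and its diagonal entries so that its row sums are zero; let ξ^k > 0 be its normalized left null vector, Ξ^k = diag(ξ^k), and D^k = L^{k,k} − L̃^{k,k} (a diagonal matrix with nonpositive entries, at least one strictly negative). Then Q_k = (1/2)[Ξ^k L^{k,k} + (Ξ^k L^{k,k})ᵀ] is negative definite. -/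
open Matrix

/-- Quadratic form of a symmetric zero-row-sum kernel as a sum of squared differences. -/
lemma laplacian_quad_aux {n : ℕ} (S : Fin n → Fin n → ℝ)
    (hsym : ∀ i j, S i j = S j i) (hrow : ∀ i, ∑ j, S i j = 0) (x : Fin n → ℝ) :
    ∑ i, ∑ j, S i j * (x i * x j) = -(1/2) * ∑ i, ∑ j, S i j * (x i - x j)^2 := by
  have h1 : ∑ i, ∑ j, S i j * (x i)^2 = 0 :=
    Finset.sum_eq_zero fun i _ => by rw [← Finset.sum_mul, hrow, zero_mul]
  have h2 : ∑ i, ∑ j, S i j * (x j)^2 = 0 := by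
    rw [Finset.sum_comm]
    refine Finset.sum_eq_zero fun j _ => ?_
    have : ∀ i, S i j * (x j)^2 = S j i * (x j)^2 := fun i => by rw [hsym]
    simp_rw [this]
    rw [← Finset.sum_mul, hrow, zero_mul]
  have expand : ∀ i j : Fin n, S i j * (x i - x j)^2
      = S i j * (x i)^2 - 2*(S i j * (x i * x j)) + S i j * (x j)^2 := fun i j => by ring
  have key : ∑ i, ∑ j, S i j * (x i - x j)^2
      = -2 * ∑ i, ∑ j, S i j * (x i * x j) := by
    simp_rw [expand, Finset.sum_add_distrib, Finset.sum_sub_distrib, ← Finset.mul_sum]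
    rw [h1, h2]; ring
  rw [key]; ring

/-- A diagonal block `A = L̃ + D` of the Perron–Frobenius form of a reducible Laplacian,
where `L̃` is the irreducible zero-row-sum part and `D` is diagonal, nonpositive, with at
least one strictly negative entry, gives a negative definite symmetrized matrix
`Q = (Ξ A + Aᵀ Ξ)/2`. -/
theorem block_Q_negative_definite {n : ℕ} (hn : 0 < n)
    (A Ltil : Matrix (Fin n) (Fin n) ℝ) (d : Fin n → ℝ)
    (hLtil : IsLaplacian Ltil) (hirr : IsIrreducibleMatrix Ltil)
    (hA : A = Ltil + Matrix.diagonal d)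
    (hd : ∀ i, d i ≤ 0) (hdneg : ∃ i, d i < 0)
    (ξ : Fin n → ℝ) (hξpos : ∀ i, 0 < ξ i)
    (hξL : ∀ j, ∑ i, ξ i * Ltil i j = 0) (hξsum : ∑ i, ξ i = 1)
    (Q : Matrix (Fin n) (Fin n) ℝ)
    (hQ : Q = (1/2 : ℝ) • (Matrix.diagonal ξ * A + (Matrix.diagonal ξ * A)ᵀ)) :
    (-Q).PosDef := by
  -- the symmetric kernel
  set S : Fin n → Fin n → ℝ := fun i j => ξ i * Ltil i j + ξ j * Ltil j i with hS
  have hsym : ∀ i j, S i j = S j i := fun i j => by simp [hS]; ring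
  have hrow : ∀ i, ∑ j, S i j = 0 := by
    intro i
    simp only [hS]
    rw [Finset.sum_add_distrib, ← Finset.mul_sum, hLtil.2 i, mul_zero, zero_add]
    exact hξL i
  have hQentry : ∀ i j, Q i j = (1/2)*(ξ i * A i j + ξ j * A j i) := by
    intro i j
    rw [hQ]
    simp [Matrix.diagonal_mul]
    ring
  -- formula for the quadratic form
  have hform : ∀ x : Fin n → ℝ, x ⬝ᵥ (Q *ᵥ x)
      = (1/2) * (∑ i, ∑ j, S i j * (x i * x j)) + ∑ i, ξ i * d i * (x i)^2 := by
    intro x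
    have h0 : x ⬝ᵥ (Q *ᵥ x) = ∑ i, ∑ j, Q i j * (x i * x j) := by
      simp only [dotProduct, mulVec, Finset.mul_sum]
      exact Finset.sum_congr rfl fun i _ => Finset.sum_congr rfl fun j _ => by ring
    have hsplit : ∀ i j, Q i j * (x i * x j)
        = (1/2) * (S i j * (x i * x j)) + (if j = i then ξ i * d i * (x i)^2 else 0) := by
      intro i j
      rw [hQentry, hA]
      by_cases h : j = i
      · subst h; simp [Matrix.add_apply, Matrix.diagonal_apply_eq, hS]; ring
      · simp [Matrix.add_apply, Matrix.diagonal_apply_ne' d h,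
          Matrix.diagonal_apply_ne d (Ne.symm h), h, hS]; ring
    rw [h0]
    simp_rw [hsplit, Finset.sum_add_distrib, ← Finset.mul_sum]
    congr 1
    refine Finset.sum_congr rfl fun i _ => ?_
    simp
  -- quadratic form in terms of squared differences
  have hform2 : ∀ x : Fin n → ℝ, x ⬝ᵥ (Q *ᵥ x)
      = -(1/4) * (∑ i, ∑ j, S i j * (x i - x j)^2) + ∑ i, ξ i * d i * (x i)^2 := by
    intro x
    rw [hform x, laplacian_quad_aux S hsym hrow x]
    ring
  rw [Matrix.posDef_iff_dotProduct_mulVec]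
  constructor
  · -- Hermitian
    ext i j
    simp only [Matrix.conjTranspose_apply, Matrix.neg_apply, star_trivial, RCLike.star_def,
      starRingEnd_apply, star_neg]
    rw [hQentry, hQentry]
    ring_nf
  · intro x hx
    have hQx : x ⬝ᵥ ((-Q) *ᵥ x)
        = (1/4) * (∑ i, ∑ j, S i j * (x i - x j)^2) + ∑ i, ξ i * (-(d i)) * (x i)^2 := by
      rw [Matrix.neg_mulVec, dotProduct_neg, hform2 x]
      have hneg : ∑ i, ξ i * (-(d i)) * (x i)^2 = -∑ i, ξ i * d i * (x i)^2 := by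
        rw [← Finset.sum_neg_distrib]
        exact Finset.sum_congr rfl fun i _ => by ring
      rw [hneg]; ring
    have hTnn : ∀ i j : Fin n, 0 ≤ S i j * (x i - x j)^2 := by
      intro i j
      by_cases h : i = j
      · subst h; simp
      · refine mul_nonneg ?_ (sq_nonneg _)
        exact add_nonneg (mul_nonneg (hξpos i).le (hLtil.1 i j h))
          (mul_nonneg (hξpos j).le (hLtil.1 j i (Ne.symm h)))
    have hDnn : ∀ i : Fin n, 0 ≤ ξ i * (-(d i)) * (x i)^2 := fun i =>
      mul_nonneg (mul_nonneg (hξpos i).le (neg_nonneg.2 (hd i))) (sq_nonneg _)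
    have hT : 0 ≤ ∑ i, ∑ j, S i j * (x i - x j)^2 :=
      Finset.sum_nonneg fun i _ => Finset.sum_nonneg fun j _ => hTnn i j
    have hD : 0 ≤ ∑ i, ξ i * (-(d i)) * (x i)^2 :=
      Finset.sum_nonneg fun i _ => hDnn i
    rw [show star x = x from rfl, hQx]
    by_contra hcon
    push_neg at hcon
    have hT0 : ∑ i, ∑ j, S i j * (x i - x j)^2 = 0 := by linarith
    have hD0 : ∑ i, ξ i * (-(d i)) * (x i)^2 = 0 := by linarith
    -- each term of T is zero
    have hT0' : ∀ i j : Fin n, S i j * (x i - x j)^2 = 0 := by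
      intro i j
      have houter : ∀ i ∈ Finset.univ, (0:ℝ) ≤ ∑ j, S i j * (x i - x j)^2 :=
        fun i _ => Finset.sum_nonneg fun j _ => hTnn i j
      have hrow0 : ∑ j, S i j * (x i - x j)^2 = 0 :=
        (Finset.sum_eq_zero_iff_of_nonneg houter).1 hT0 i (Finset.mem_univ i)
      exact (Finset.sum_eq_zero_iff_of_nonneg (fun j _ => hTnn i j)).1 hrow0 j
        (Finset.mem_univ j)
    have hD0' : ∀ i : Fin n, ξ i * (-(d i)) * (x i)^2 = 0 :=
      fun i => (Finset.sum_eq_zero_iff_of_nonneg (fun i _ => hDnn i)).1 hD0 i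
        (Finset.mem_univ i)
    have hedge : ∀ a b : Fin n, (a ≠ b ∧ 0 < Ltil a b) → x a = x b := by
      intro a b ⟨hab, hpos⟩
      have hSpos : 0 < S a b :=
        add_pos_of_pos_of_nonneg (mul_pos (hξpos a) hpos)
          (mul_nonneg (hξpos b).le (hLtil.1 b a (Ne.symm hab)))
      have := hT0' a b
      have hsq : (x a - x b)^2 = 0 := by
        rcases mul_eq_zero.1 this with h | h
        · exact absurd h hSpos.ne'
        · exact h
      have := pow_eq_zero_iff (by norm_num : (2:ℕ) ≠ 0) |>.1 hsq
      linarith [sub_eq_zero.1 this]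
    have hconn : ∀ a b : Fin n,
        Relation.TransGen (fun a b => a ≠ b ∧ 0 < Ltil a b) a b → x a = x b := by
      intro a b htg
      induction htg with
      | single h' => exact hedge _ _ h'
      | tail _ h' ih => exact ih.trans (hedge _ _ h')
    obtain ⟨i₀, hi₀⟩ := hdneg
    have hx0 : x i₀ = 0 := by
      have := hD0' i₀
      have hpos : 0 < ξ i₀ * (-(d i₀)) := mul_pos (hξpos i₀) (neg_pos.2 hi₀)
      have : (x i₀)^2 = 0 := by
        rcases mul_eq_zero.1 this with h | h
        · exact absurd h hpos.ne'
        · exact h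
      exact pow_eq_zero_iff (by norm_num) |>.1 this
    have hall : ∀ j : Fin n, x j = 0 := by
      intro j
      by_cases h : j = i₀
      · rw [h]; exact hx0
      · rw [hconn j i₀ (hirr j i₀ h)]; exact hx0
    exact hx (funext hall)
end
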